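/- On the 4-qubit singlet code, the operator X̄ = (1/√3)(E₂₃ - E₁₃) acts as the logical Pauli X: X̄ S⁰ = S¹ and X̄ S¹ = S⁰, and X̄ preserves the code subspace spanned by S⁰, S¹. -/
import Mathlib


open Matrix Kronecker

/-- Computational basis vector `|abcd⟩` of the 4-qubit space. -/
noncomputable def ket4 (a b c d : Fin 2) : Fin 2 × Fin 2 × Fin 2 × Fin 2 → ℂ :=
  fun x => if x = (a, b, c, d) then 1 else 0

noncomputable def pauliX : Matrix (Fin 2) (Fin 2) ℂ := !![0, 1; 1, 0]
noncomputable def pauliY : Matrix (Fin 2) (Fin 2) ℂ := !![0, -Complex.I; Complex.I, 0]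
noncomputable def pauliZ : Matrix (Fin 2) (Fin 2) ℂ := !![1, 0; 0, -1]

/-- Collective spin operator `S_α = Σᵢ σᵢ^α` on 4 qubits. -/
noncomputable def collOp4 (σ : Matrix (Fin 2) (Fin 2) ℂ) :
    Matrix (Fin 2 × Fin 2 × Fin 2 × Fin 2) (Fin 2 × Fin 2 × Fin 2 × Fin 2) ℂ :=
  σ ⊗ₖ ((1 : Matrix (Fin 2) (Fin 2) ℂ) ⊗ₖ ((1 : Matrix (Fin 2) (Fin 2) ℂ) ⊗ₖ (1 : Matrix (Fin 2) (Fin 2) ℂ))) +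
  (1 : Matrix (Fin 2) (Fin 2) ℂ) ⊗ₖ (σ ⊗ₖ ((1 : Matrix (Fin 2) (Fin 2) ℂ) ⊗ₖ (1 : Matrix (Fin 2) (Fin 2) ℂ))) +
  (1 : Matrix (Fin 2) (Fin 2) ℂ) ⊗ₖ ((1 : Matrix (Fin 2) (Fin 2) ℂ) ⊗ₖ (σ ⊗ₖ (1 : Matrix (Fin 2) (Fin 2) ℂ))) +
  (1 : Matrix (Fin 2) (Fin 2) ℂ) ⊗ₖ ((1 : Matrix (Fin 2) (Fin 2) ℂ) ⊗ₖ ((1 : Matrix (Fin 2) (Fin 2) ℂ) ⊗ₖ σ))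

/-- The 4-qubit singlet state `S⁰`. -/
noncomputable def S0 : Fin 2 × Fin 2 × Fin 2 × Fin 2 → ℂ :=
  (1 / 2 : ℂ) • (ket4 0 1 0 1 + ket4 1 0 1 0 - ket4 0 1 1 0 - ket4 1 0 0 1)

/-- The 4-qubit singlet state `S¹`. -/
noncomputable def S1 : Fin 2 × Fin 2 × Fin 2 × Fin 2 → ℂ :=
  (Real.sqrt 12 : ℂ)⁻¹ •
    ((2 : ℂ) • ket4 0 0 1 1 + (2 : ℂ) • ket4 1 1 0 0 -
      ket4 0 1 1 0 - ket4 1 0 0 1 - ket4 0 1 0 1 - ket4 1 0 1 0)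

/-- Swap of qubits 1 and 3 on the 4-qubit space. -/
noncomputable def E13 :
    Matrix (Fin 2 × Fin 2 × Fin 2 × Fin 2) (Fin 2 × Fin 2 × Fin 2 × Fin 2) ℂ :=
  Matrix.of fun p q => if q = (p.2.2.1, p.2.1, p.1, p.2.2.2) then 1 else 0

/-- Swap of qubits 2 and 3 on the 4-qubit space. -/
noncomputable def E23 :
    Matrix (Fin 2 × Fin 2 × Fin 2 × Fin 2) (Fin 2 × Fin 2 × Fin 2 × Fin 2) ℂ :=
  Matrix.of fun p q => if q = (p.1, p.2.2.1, p.2.1, p.2.2.2) then 1 else 0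


lemma E23_mulVec (v : Fin 2 × Fin 2 × Fin 2 × Fin 2 → ℂ) :
    E23.mulVec v = fun p => v (p.1, p.2.2.1, p.2.1, p.2.2.2) := by
  funext p
  simp [E23, mulVec, dotProduct]

lemma E13_mulVec (v : Fin 2 × Fin 2 × Fin 2 × Fin 2 → ℂ) :
    E13.mulVec v = fun p => v (p.2.2.1, p.2.1, p.1, p.2.2.2) := by
  funext p
  simp [E13, mulVec, dotProduct]

lemma sqrt12' : (Real.sqrt 12 : ℂ) = 2 * (Real.sqrt 3 : ℂ) := by
  norm_cast
  rw [show (12:ℝ) = 4 * 3 by norm_num, Real.sqrt_mul (by norm_num)]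
  norm_num [Real.sqrt_eq_iff_eq_sq]

lemma s3 : (Real.sqrt 3 : ℂ) * (Real.sqrt 3 : ℂ) = 3 := by
  norm_cast
  rw [Real.mul_self_sqrt]; norm_num

lemma s3ne : (Real.sqrt 3 : ℂ) ≠ 0 := by
  norm_cast
  positivity

lemma Xbar_S0 : (((Real.sqrt 3 : ℂ)⁻¹ • (E23 - E13)).mulVec S0) = S1 := by
  rw [smul_mulVec, sub_mulVec, E23_mulVec, E13_mulVec]
  funext p
  obtain ⟨a, b, c, d⟩ := p
  have h3 := s3
  have hne := s3ne
  fin_cases a <;> fin_cases b <;> fin_cases c <;> fin_cases d <;>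
    simp only [S0, S1, ket4, sqrt12', Pi.smul_apply, Pi.add_apply, Pi.sub_apply,
      smul_eq_mul, Prod.mk.injEq] <;>
    norm_num <;>
    field_simp <;>
    (try (simp only [← mul_assoc, pow_two, h3]; norm_num))

lemma Xbar_S1 : (((Real.sqrt 3 : ℂ)⁻¹ • (E23 - E13)).mulVec S1) = S0 := by
  rw [smul_mulVec, sub_mulVec, E23_mulVec, E13_mulVec]
  funext p
  obtain ⟨a, b, c, d⟩ := p
  have h3 := s3
  have hne := s3ne
  fin_cases a <;> fin_cases b <;> fin_cases c <;> fin_cases d <;>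
    simp only [S0, S1, ket4, sqrt12', Pi.smul_apply, Pi.add_apply, Pi.sub_apply,
      smul_eq_mul, Prod.mk.injEq] <;>
    norm_num <;>
    field_simp <;>
    (try (simp only [← mul_assoc, pow_two, h3]; norm_num))

/-- on the 4-qubit singlet code, `X̄ = (1/√3)(E₂₃ - E₁₃)` acts as the
logical Pauli `X`: it exchanges `S⁰` and `S¹` and preserves the code subspace. -/
theorem logical_X_four_qubit_dfs
    (Xbar : Matrix (Fin 2 × Fin 2 × Fin 2 × Fin 2) (Fin 2 × Fin 2 × Fin 2 × Fin 2) ℂ)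
    (hX : Xbar = (Real.sqrt 3 : ℂ)⁻¹ • (E23 - E13)) :
    Xbar.mulVec S0 = S1 ∧ Xbar.mulVec S1 = S0 ∧
    (∀ v ∈ (Submodule.span ℂ {S0, S1} :
        Submodule ℂ (Fin 2 × Fin 2 × Fin 2 × Fin 2 → ℂ)),
      Xbar.mulVec v ∈ (Submodule.span ℂ {S0, S1} :
        Submodule ℂ (Fin 2 × Fin 2 × Fin 2 × Fin 2 → ℂ))) := by
  subst hX
  refine ⟨Xbar_S0, Xbar_S1, ?_⟩
  intro v hv
  induction hv using Submodule.span_induction with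
  | mem x hx =>
    rcases hx with h | h <;> subst h
    · rw [Xbar_S0]; exact Submodule.subset_span (Or.inr rfl)
    · rw [Xbar_S1]; exact Submodule.subset_span (Or.inl rfl)
  | zero => simp [mulVec_zero]
  | add x y _ _ hx hy => rw [mulVec_add]; exact Submodule.add_mem _ hx hy
  | smul c x _ hx => rw [mulVec_smul]; exact Submodule.smul_mem _ c hx
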